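/- For α > 1/2 and a > 0, define I_α(a) = ∫_a^∞ (1+r²)^{−α} dr. Then for every α > 1/2 and every a > 0, I_α(a) = a · Σ_{k=0}^{∞} [ 1/(2α+2k−1) ] · ( ∏_{i=0}^{k−1} (2α+2i)/(2α+2i−1) ) · (1+a²)^{−(α+k)}, where the empty product (k = 0) equals 1, and the series on the right-hand side converges. -/

import Mathlib

open MeasureTheory

/-- `I_α(a) = ∫_a^∞ (1+r²)^{−α} dr`. -/
noncomputable def Iint (α a : ℝ) : ℝ := ∫ r in Set.Ioi a, (1 + r ^ 2) ^ (-α)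

section Aux
open Set Filter Real Topology
lemma cont_g (α : ℝ) : Continuous (fun r : ℝ => (1 + r ^ 2) ^ (-α)) := by
  apply Continuous.rpow_const (by continuity)
  intro x; left; positivity

lemma integrable_g {α a : ℝ} (hα : 1 / 2 < α) (ha : 0 < a) :
    IntegrableOn (fun r : ℝ => (1 + r ^ 2) ^ (-α)) (Ioi a) := by
  have hb : IntegrableOn (fun r : ℝ => r ^ (-(2*α))) (Ioi a) :=
    integrableOn_Ioi_rpow_of_lt (by linarith) ha
  refine Integrable.mono' hb ((cont_g α).aestronglyMeasurable.restrict) ?_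
  filter_upwards [ae_restrict_mem measurableSet_Ioi] with r hr
  have hr0 : 0 < r := ha.trans hr
  rw [Real.norm_eq_abs, abs_of_nonneg (by positivity)]
  calc (1 + r ^ 2) ^ (-α) ≤ (r ^ 2) ^ (-α) := by
        apply Real.rpow_le_rpow_of_nonpos (by positivity) (by linarith) (by linarith)
    _ = r ^ (-(2*α)) := by
        rw [← Real.rpow_natCast r 2, ← Real.rpow_mul hr0.le]; ring_nf

lemma hasDeriv_f (α : ℝ) (r : ℝ) :
    HasDerivAt (fun s : ℝ => s * (1 + s ^ 2) ^ (-α))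
      ((1 - 2*α) * (1 + r ^ 2) ^ (-α) + 2*α * (1 + r ^ 2) ^ (-(α+1))) r := by
  have hpos : (0:ℝ) < 1 + r ^ 2 := by positivity
  have h1 : HasDerivAt (fun s : ℝ => 1 + s ^ 2) (2 * r) r := by
    simpa using (hasDerivAt_pow 2 r).const_add 1
  have h2 : HasDerivAt (fun s : ℝ => (1 + s ^ 2) ^ (-α))
      (2 * r * (-α) * (1 + r ^ 2) ^ (-α - 1)) r :=
    h1.rpow_const (Or.inl hpos.ne')
  have h3 := (hasDerivAt_id r).mul h2
  refine h3.congr_deriv ?_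
  have key : (1 + r ^ 2) ^ (-α) = (1 + r ^ 2) ^ (-α - 1) * (1 + r ^ 2) := by
    rw [← Real.rpow_add_one hpos.ne' (-α - 1)]; ring_nf
  have key2 : (1 + r ^ 2) ^ (-(α+1)) = (1 + r ^ 2) ^ (-α - 1) := by ring_nf
  rw [key2]
  simp only [id]; rw [key]; ring

lemma tendsto_f (α : ℝ) (hα : 1 / 2 < α) :
    Tendsto (fun r : ℝ => r * (1 + r ^ 2) ^ (-α)) atTop (𝓝 0) := by
  have h0 : Tendsto (fun r : ℝ => r ^ (-(2*α - 1))) atTop (𝓝 0) :=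
    tendsto_rpow_neg_atTop (by linarith)
  apply squeeze_zero' (g := fun r : ℝ => r ^ (-(2*α - 1)))
  · filter_upwards [eventually_ge_atTop (1:ℝ)] with r hr
    positivity
  · filter_upwards [eventually_ge_atTop (1:ℝ)] with r hr
    have hr0 : (0:ℝ) < r := by linarith
    have h1 : (1 + r ^ 2) ^ (-α) ≤ (r ^ 2) ^ (-α) :=
      Real.rpow_le_rpow_of_nonpos (by positivity) (by linarith) (by linarith)
    have e1 : ((r ^ 2 : ℝ)) ^ (-α) = r ^ (-(2*α)) := by
      rw [← Real.rpow_natCast r 2, ← Real.rpow_mul hr0.le]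
      norm_num
    calc r * (1 + r ^ 2) ^ (-α) ≤ r * (r ^ 2) ^ (-α) :=
          mul_le_mul_of_nonneg_left h1 hr0.le
      _ = r ^ (-(2*α - 1)) := by
          rw [e1, show -(2*α - 1) = 1 + -(2*α) by ring, Real.rpow_add hr0,
            Real.rpow_one]
  · exact h0

lemma ibp {α a : ℝ} (hα : 1 / 2 < α) (ha : 0 < a) :
    Iint α a = a * (1 + a ^ 2) ^ (-α) / (2*α - 1) + (2*α / (2*α - 1)) * Iint (α+1) a := by
  have hg : IntegrableOn (fun r : ℝ => (1 + r ^ 2) ^ (-α)) (Ioi a) := integrable_g hα ha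
  have hg1 : IntegrableOn (fun r : ℝ => (1 + r ^ 2) ^ (-(α+1))) (Ioi a) :=
    integrable_g (by linarith) ha
  have hint : IntegrableOn
      (fun r : ℝ => (1 - 2*α) * (1 + r ^ 2) ^ (-α) + 2*α * (1 + r ^ 2) ^ (-(α+1))) (Ioi a) :=
    (hg.const_mul _).add (hg1.const_mul _)
  have key := integral_Ioi_of_hasDerivAt_of_tendsto
    (f := fun s : ℝ => s * (1 + s ^ 2) ^ (-α))
    (f' := fun r : ℝ => (1 - 2*α) * (1 + r ^ 2) ^ (-α) + 2*α * (1 + r ^ 2) ^ (-(α+1)))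
    (a := a) (m := 0)
    ((continuous_id.mul (cont_g α)).continuousWithinAt)
    (fun x _ => hasDeriv_f α x) hint (tendsto_f α hα)
  rw [MeasureTheory.integral_add (hg.const_mul _) (hg1.const_mul _),
    MeasureTheory.integral_const_mul, MeasureTheory.integral_const_mul] at key
  have e1 : ∫ r in Ioi a, (1 + r ^ 2) ^ (-α) = Iint α a := rfl
  have e2 : ∫ r in Ioi a, (1 + r ^ 2) ^ (-(α+1)) = Iint (α+1) a := rfl
  rw [e1, e2] at key
  have h1 : (2*α - 1) ≠ 0 := by intro h; rw [sub_eq_zero] at h; linarith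
  field_simp
  simp only [zero_sub] at key
  rw [eq_div_iff (by intro h; apply h1; linarith)]
  linarith [key]

noncomputable def tt (α a : ℝ) (k : ℕ) : ℝ :=
  (1 / (2 * α + 2 * (k : ℝ) - 1))
    * (∏ i ∈ Finset.range k, (2 * α + 2 * (i : ℝ)) / (2 * α + 2 * (i : ℝ) - 1))
    * (1 + a ^ 2) ^ (-(α + (k : ℝ)))

noncomputable def PP (α : ℝ) (n : ℕ) : ℝ :=
  ∏ i ∈ Finset.range n, (2 * α + 2 * (i : ℝ)) / (2 * α + 2 * (i : ℝ) - 1)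

lemma PP_nonneg {α : ℝ} (hα : 1 / 2 < α) (n : ℕ) : 0 ≤ PP α n := by
  apply Finset.prod_nonneg
  intro i _
  have h1 : (0:ℝ) < 2 * α + 2 * (i:ℝ) - 1 := by
    have : (0:ℝ) ≤ (i:ℝ) := Nat.cast_nonneg i
    linarith
  have h2 : (0:ℝ) < 2 * α + 2 * (i:ℝ) := by linarith
  positivity

lemma tt_nonneg {α a : ℝ} (hα : 1 / 2 < α) (k : ℕ) : 0 ≤ tt α a k := by
  have h1 : (0:ℝ) < 2 * α + 2 * (k:ℝ) - 1 := by
    have : (0:ℝ) ≤ (k:ℝ) := Nat.cast_nonneg k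
    linarith
  have h2 := PP_nonneg hα k
  unfold tt
  have h3 : (0:ℝ) ≤ (1 + a ^ 2) ^ (-(α + (k:ℝ))) := rpow_nonneg (by positivity) _
  have h4 : (0:ℝ) ≤ 1 / (2 * α + 2 * (k:ℝ) - 1) := by positivity
  exact mul_nonneg (mul_nonneg h4 h2) h3

lemma tt_succ {α a : ℝ} (hα : 1 / 2 < α) (ha : 0 < a) (k : ℕ) :
    tt α a (k+1) = tt α a k * ((2*α + 2*(k:ℝ)) / (2*α + 2*(k:ℝ) + 1)) * (1 + a^2)⁻¹ := by
  have hpos : (0:ℝ) < 1 + a ^ 2 := by positivity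
  have hk : (0:ℝ) < 2 * α + 2 * (k:ℝ) - 1 := by
    have : (0:ℝ) ≤ (k:ℝ) := Nat.cast_nonneg k
    linarith
  unfold tt
  rw [Finset.prod_range_succ]
  have e1 : (1 + a ^ 2) ^ (-(α + ((k+1 : ℕ):ℝ))) = (1 + a ^ 2) ^ (-(α + (k:ℝ))) * (1 + a^2)⁻¹ := by
    push_cast
    rw [show -(α + ((k:ℝ)+1)) = -(α + (k:ℝ)) + (-1) by ring, Real.rpow_add hpos,
      Real.rpow_neg_one]
  rw [e1]
  push_cast
  ring

lemma tt_ratio {α a : ℝ} (hα : 1 / 2 < α) (ha : 0 < a) (k : ℕ) :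
    tt α a (k+1) ≤ (1 + a ^ 2)⁻¹ * tt α a k := by
  have hk : (0:ℝ) ≤ (k:ℝ) := Nat.cast_nonneg k
  have h1 : (0:ℝ) < 2 * α + 2 * (k:ℝ) := by linarith
  have h2 : (0:ℝ) < 2 * α + 2 * (k:ℝ) + 1 := by linarith
  have hc : (2*α + 2*(k:ℝ)) / (2*α + 2*(k:ℝ) + 1) ≤ 1 := by
    rw [div_le_one h2]; linarith
  rw [tt_succ hα ha k]
  have := tt_nonneg (a := a) hα k
  have hinv : (0:ℝ) ≤ (1 + a^2)⁻¹ := by positivity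
  calc tt α a k * ((2*α + 2*(k:ℝ)) / (2*α + 2*(k:ℝ) + 1)) * (1 + a^2)⁻¹
      ≤ tt α a k * 1 * (1 + a^2)⁻¹ := by
        apply mul_le_mul_of_nonneg_right _ hinv
        exact mul_le_mul_of_nonneg_left hc this
    _ = (1 + a ^ 2)⁻¹ * tt α a k := by ring

lemma tt_summable {α a : ℝ} (hα : 1 / 2 < α) (ha : 0 < a) : Summable (tt α a) := by
  have hq : (1 + a ^ 2)⁻¹ < 1 := by
    rw [inv_lt_one_iff₀]; right; nlinarith
  apply summable_of_ratio_norm_eventually_le hq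
  filter_upwards with k
  rw [Real.norm_eq_abs, Real.norm_eq_abs, abs_of_nonneg (tt_nonneg hα _),
    abs_of_nonneg (tt_nonneg hα _)]
  exact tt_ratio hα ha k

lemma tt_le_geom {α a : ℝ} (hα : 1 / 2 < α) (ha : 0 < a) (n : ℕ) :
    tt α a n ≤ tt α a 0 * ((1 + a ^ 2)⁻¹) ^ n := by
  induction n with
  | zero => simp
  | succ n ih =>
    have hinv : (0:ℝ) ≤ (1 + a^2)⁻¹ := by positivity
    calc tt α a (n+1) ≤ (1 + a ^ 2)⁻¹ * tt α a n := tt_ratio hα ha n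
      _ ≤ (1 + a ^ 2)⁻¹ * (tt α a 0 * ((1 + a ^ 2)⁻¹) ^ n) :=
          mul_le_mul_of_nonneg_left ih hinv
      _ = tt α a 0 * ((1 + a ^ 2)⁻¹) ^ (n+1) := by ring

lemma PP_eq_tt {α a : ℝ} (hα : 1 / 2 < α) (ha : 0 < a) (n : ℕ) :
    PP α n * ((1 + a ^ 2)⁻¹) ^ n
      = (2 * α + 2 * (n:ℝ) - 1) * (1 + a ^ 2) ^ α * tt α a n := by
  have hpa : (0:ℝ) < 1 + a ^ 2 := by positivity
  have hk : (0:ℝ) ≤ (n:ℝ) := Nat.cast_nonneg n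
  have hne : (2 * α + 2 * (n:ℝ) - 1) ≠ 0 := by intro h; rw [sub_eq_zero] at h; linarith
  have e1 : (1 + a ^ 2) ^ (-(n:ℝ)) = ((1 + a ^ 2)⁻¹) ^ n := by
    rw [Real.rpow_neg hpa.le, Real.rpow_natCast, inv_pow]
  have e2 : (1 + a ^ 2) ^ α * (1 + a ^ 2) ^ (-α) = 1 := by
    rw [← Real.rpow_add hpa]; simp
  unfold tt PP
  rw [show -(α + (n:ℝ)) = -α + (-(n:ℝ)) by ring, Real.rpow_add hpa, e1]
  set Pr := ∏ i ∈ Finset.range n, (2 * α + 2 * (i : ℝ)) / (2 * α + 2 * (i : ℝ) - 1) with hPr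
  rw [Real.rpow_neg hpa.le]
  have hA : (1 + a ^ 2) ^ α ≠ 0 := by positivity
  have hne' : 2 * (α + (n:ℝ)) - 1 ≠ 0 := by intro h; apply hne; linarith
  field_simp

lemma Iint_nonneg (β a : ℝ) : 0 ≤ Iint β a :=
  setIntegral_nonneg measurableSet_Ioi (fun r _ => rpow_nonneg (by positivity) _)

lemma Iint_partial {α a : ℝ} (hα : 1 / 2 < α) (ha : 0 < a) (n : ℕ) :
    Iint α a = a * (∑ k ∈ Finset.range n, tt α a k) + PP α n * Iint (α + n) a := by
  induction n with
  | zero => simp [PP]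
  | succ n ih =>
    have hαn : 1 / 2 < α + (n:ℝ) := by
      have : (0:ℝ) ≤ (n:ℝ) := Nat.cast_nonneg n
      linarith
    have hden : (0:ℝ) < 2 * (α + (n:ℝ)) - 1 := by linarith
    have step := ibp hαn ha
    have e1 : α + (n:ℝ) + 1 = α + ((n+1 : ℕ):ℝ) := by push_cast; ring
    rw [e1] at step
    rw [ih, step]
    rw [Finset.sum_range_succ]
    have ePP : PP α (n+1) = PP α n * ((2*α+2*(n:ℝ))/(2*α+2*(n:ℝ)-1)) :=
      Finset.prod_range_succ _ n
    rw [ePP]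
    have etk : tt α a n = (1 / (2 * α + 2 * (n : ℝ) - 1)) * PP α n
        * (1 + a ^ 2) ^ (-(α + (n : ℝ))) := rfl
    have hne : (2 * α + 2 * (n:ℝ) - 1) ≠ 0 := by intro h; rw [sub_eq_zero] at h; linarith
    rw [etk]
    field_simp
    ring

lemma Iint_shift_le {α a : ℝ} (hα : 1 / 2 < α) (ha : 0 < a) (n : ℕ) :
    Iint (α + n) a ≤ ((1 + a ^ 2)⁻¹) ^ n * Iint α a := by
  have hpa : (0:ℝ) < 1 + a ^ 2 := by positivity
  have hαn : 1 / 2 < α + (n:ℝ) := by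
    have : (0:ℝ) ≤ (n:ℝ) := Nat.cast_nonneg n
    linarith
  have hInt1 : IntegrableOn (fun r : ℝ => (1 + r ^ 2) ^ (-(α + (n:ℝ)))) (Ioi a) :=
    integrable_g hαn ha
  have hInt2 : IntegrableOn
      (fun r : ℝ => ((1 + a ^ 2)⁻¹) ^ n * (1 + r ^ 2) ^ (-α)) (Ioi a) :=
    (integrable_g hα ha).const_mul _
  have hb : ∀ r ∈ Ioi a, (1 + r ^ 2) ^ (-(α + (n:ℝ)))
      ≤ ((1 + a ^ 2)⁻¹) ^ n * (1 + r ^ 2) ^ (-α) := by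
    intro r hr
    have har : a < r := hr
    have hpr : (0:ℝ) < 1 + r ^ 2 := by positivity
    have e1 : (1 + r ^ 2) ^ (-(α + (n:ℝ)))
        = (1 + r ^ 2) ^ (-(n:ℝ)) * (1 + r ^ 2) ^ (-α) := by
      rw [← Real.rpow_add hpr]; ring_nf
    rw [e1]
    have h2 : (1 + r ^ 2) ^ (-(n:ℝ)) ≤ (1 + a ^ 2) ^ (-(n:ℝ)) := by
      apply Real.rpow_le_rpow_of_nonpos hpa (by nlinarith)
      simp [Nat.cast_nonneg]
    have h3 : (1 + a ^ 2) ^ (-(n:ℝ)) = ((1 + a ^ 2)⁻¹) ^ n := by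
      rw [Real.rpow_neg hpa.le, Real.rpow_natCast, inv_pow]
    rw [h3] at h2
    exact mul_le_mul_of_nonneg_right h2 (rpow_nonneg hpr.le _)
  have := setIntegral_mono_on hInt1 hInt2 measurableSet_Ioi hb
  calc Iint (α + n) a = ∫ r in Ioi a, (1 + r ^ 2) ^ (-(α + (n:ℝ))) := rfl
    _ ≤ ∫ r in Ioi a, ((1 + a ^ 2)⁻¹) ^ n * (1 + r ^ 2) ^ (-α) := this
    _ = ((1 + a ^ 2)⁻¹) ^ n * Iint α a := by rw [MeasureTheory.integral_const_mul]; rfl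

end Aux

open Set Filter Real Topology in
/-- The series expansion
`I_α(a) = a Σ_{k≥0} (2α+2k−1)⁻¹ (∏_{i<k} (2α+2i)/(2α+2i−1)) (1+a²)^{−(α+k)}`,
and the series converges. -/
theorem Iint_series (α a : ℝ) (hα : 1 / 2 < α) (ha : 0 < a) :
    Summable (fun k : ℕ => (1 / (2 * α + 2 * (k : ℝ) - 1))
      * (∏ i ∈ Finset.range k, (2 * α + 2 * (i : ℝ)) / (2 * α + 2 * (i : ℝ) - 1))
      * (1 + a ^ 2) ^ (-(α + (k : ℝ)))) ∧
    Iint α a = a * ∑' k : ℕ, (1 / (2 * α + 2 * (k : ℝ) - 1))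
      * (∏ i ∈ Finset.range k, (2 * α + 2 * (i : ℝ)) / (2 * α + 2 * (i : ℝ) - 1))
      * (1 + a ^ 2) ^ (-(α + (k : ℝ))) := by
  have hsum : Summable (tt α a) := tt_summable hα ha
  refine ⟨hsum, ?_⟩
  have hpa : (0:ℝ) < 1 + a ^ 2 := by positivity
  set q : ℝ := (1 + a ^ 2)⁻¹ with hqdef
  have hq0 : (0:ℝ) ≤ q := by positivity
  have hq1 : q < 1 := by
    rw [hqdef, inv_lt_one_iff₀]; right; nlinarith
  -- remainder
  set R : ℕ → ℝ := fun n => PP α n * Iint (α + n) a with hR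
  have hRle : ∀ n, R n ≤ ((2 * α + 2 * (n:ℝ) - 1) * (1 + a ^ 2) ^ α * (tt α a 0 * q ^ n))
      * Iint α a := by
    intro n
    have h1 : R n ≤ (PP α n * q ^ n) * Iint α a := by
      have := Iint_shift_le hα ha n
      calc R n ≤ PP α n * (q ^ n * Iint α a) :=
            mul_le_mul_of_nonneg_left this (PP_nonneg hα n)
        _ = (PP α n * q ^ n) * Iint α a := by ring
    have hk : (0:ℝ) ≤ (n:ℝ) := Nat.cast_nonneg n
    have hc : (0:ℝ) ≤ (2 * α + 2 * (n:ℝ) - 1) * (1 + a ^ 2) ^ α := by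
      have : (0:ℝ) ≤ (1 + a ^ 2) ^ α := rpow_nonneg hpa.le α
      nlinarith
    calc R n ≤ (PP α n * q ^ n) * Iint α a := h1
      _ = ((2 * α + 2 * (n:ℝ) - 1) * (1 + a ^ 2) ^ α * tt α a n) * Iint α a := by
          rw [PP_eq_tt hα ha n]
      _ ≤ ((2 * α + 2 * (n:ℝ) - 1) * (1 + a ^ 2) ^ α * (tt α a 0 * q ^ n)) * Iint α a := by
          apply mul_le_mul_of_nonneg_right _ (Iint_nonneg _ _)
          exact mul_le_mul_of_nonneg_left (tt_le_geom hα ha n) hc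
  have hR0 : ∀ n, 0 ≤ R n := fun n =>
    mul_nonneg (PP_nonneg hα n) (Iint_nonneg _ _)
  -- upper sequence tends to zero
  have h1 : Tendsto (fun n : ℕ => q ^ n) atTop (𝓝 0) :=
    tendsto_pow_atTop_nhds_zero_of_lt_one hq0 hq1
  have h2 : Tendsto (fun n : ℕ => (n:ℝ) * q ^ n) atTop (𝓝 0) := by
    have hs : Summable (fun n : ℕ => (n:ℝ) ^ 1 * q ^ n) :=
      summable_pow_mul_geometric_of_norm_lt_one 1
        (by rwa [Real.norm_eq_abs, abs_of_nonneg hq0])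
    simpa using hs.tendsto_atTop_zero
  have hup : Tendsto (fun n : ℕ =>
      ((2 * α + 2 * (n:ℝ) - 1) * (1 + a ^ 2) ^ α * (tt α a 0 * q ^ n)) * Iint α a)
      atTop (𝓝 0) := by
    have := ((h1.const_mul (2*α-1)).add (h2.const_mul 2)).mul_const
      ((1 + a ^ 2) ^ α * tt α a 0 * Iint α a)
    simp only [add_zero, mul_zero, zero_mul, zero_add] at this
    apply this.congr
    intro n
    ring
  have hRtend : Tendsto R atTop (𝓝 0) := squeeze_zero hR0 hRle hup
  -- partial sums converge to Iint
  have hPS : Tendsto (fun n : ℕ => a * ∑ k ∈ Finset.range n, tt α a k) atTop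
      (𝓝 (Iint α a)) := by
    have : (fun n : ℕ => a * ∑ k ∈ Finset.range n, tt α a k)
        = fun n : ℕ => Iint α a - R n := by
      funext n
      have h := Iint_partial hα ha n
      have hRn : R n = PP α n * Iint (α + ↑n) a := rfl
      linarith
    rw [this]
    simpa using (tendsto_const_nhds (x := Iint α a)).sub hRtend
  have hPS2 : Tendsto (fun n : ℕ => a * ∑ k ∈ Finset.range n, tt α a k) atTop
      (𝓝 (a * ∑' k, tt α a k)) :=
    (hsum.hasSum.tendsto_sum_nat).const_mul a
  exact tendsto_nhds_unique hPS hPS2
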